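/- Let λ > 0, μ > 0 with λ ≠ μ, let 0 < ρ ≤ 1 and t ≥ 0. Then 2λ Σ_{k=0}^∞ Σ_{r=0}^∞ 2^r (λ−μ)^{k+r} t^{(k+r+1)ρ} / Γ((k+r+1)ρ + 1) = (2λ/(λ−μ)) ( E_{ρ,1}(2(λ−μ) t^ρ) − E_{ρ,1}((λ−μ) t^ρ) ), where the double series converges absolutely. -/

import Mathlib

open MeasureTheory Real

/-- Two-parameter Mittag-Leffler function. -/
noncomputable def ml2 (ρ δ x : ℝ) : ℝ := ∑' k : ℕ, x ^ k / Real.Gamma ((k : ℝ) * ρ + δ)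

/-- Log-convexity of `Γ`: `Γ(s) (s+ρ-1)^ρ ≤ Γ(s+ρ)` for `1 ≤ s`, `0 < ρ ≤ 1`. -/
lemma gamma_mul_rpow_le {ρ s : ℝ} (hρ : 0 < ρ) (hρ1 : ρ ≤ 1) (hs : 1 ≤ s) :
    Real.Gamma s * (s + ρ - 1) ^ ρ ≤ Real.Gamma (s + ρ) := by
  have hs0 : (0:ℝ) < s := lt_of_lt_of_le one_pos hs
  have ha : (0:ℝ) < s + ρ - 1 := by linarith
  have hb : (0:ℝ) < s + ρ := by linarith
  have hconv := Real.convexOn_log_Gamma.2 (Set.mem_Ioi.mpr ha) (Set.mem_Ioi.mpr hb)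
      hρ.le (by linarith : (0:ℝ) ≤ 1 - ρ) (by ring)
  have hcomb : ρ • (s + ρ - 1) + (1 - ρ) • (s + ρ) = s := by
    simp only [smul_eq_mul]; ring
  rw [hcomb] at hconv
  simp only [Function.comp, smul_eq_mul] at hconv
  have hGa : 0 < Real.Gamma (s + ρ - 1) := Real.Gamma_pos_of_pos ha
  have hGb : 0 < Real.Gamma (s + ρ) := Real.Gamma_pos_of_pos hb
  have hGs : 0 < Real.Gamma s := Real.Gamma_pos_of_pos hs0
  have hrec : Real.Gamma (s + ρ) = (s + ρ - 1) * Real.Gamma (s + ρ - 1) := by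
    have h := Real.Gamma_add_one (ne_of_gt ha)
    rw [show s + ρ - 1 + 1 = s + ρ by ring] at h
    exact h
  have hlog : Real.log (Real.Gamma (s + ρ - 1))
      = Real.log (Real.Gamma (s + ρ)) - Real.log (s + ρ - 1) := by
    rw [hrec, Real.log_mul (ne_of_gt ha) (ne_of_gt hGa)]; ring
  rw [hlog] at hconv
  have key : Real.log (Real.Gamma s) + Real.log (s + ρ - 1) * ρ
      ≤ Real.log (Real.Gamma (s + ρ)) := by nlinarith [hconv]
  have h2 := Real.exp_le_exp.mpr key
  rwa [Real.exp_add, Real.exp_log hGs, ← Real.rpow_def_of_pos ha, Real.exp_log hGb] at h2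

/-- Summability of Mittag-Leffler type series, nonnegative case. -/
lemma ml_summable {ρ : ℝ} (hρ : 0 < ρ) (hρ1 : ρ ≤ 1) {y b : ℝ} (hy : 0 ≤ y) (hb : 1 ≤ b) :
    Summable fun n : ℕ => y ^ n / Real.Gamma ((n : ℝ) * ρ + b) := by
  have hGpos : ∀ n : ℕ, 0 < Real.Gamma ((n : ℝ) * ρ + b) := by
    intro n
    apply Real.Gamma_pos_of_pos
    have : (0:ℝ) ≤ (n : ℝ) * ρ := mul_nonneg (Nat.cast_nonneg n) hρ.le
    linarith
  apply summable_of_ratio_norm_eventually_le (r := 2⁻¹) (by norm_num)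
  have htend : Filter.Tendsto (fun n : ℕ => ((n:ℝ) * ρ + b + ρ - 1) ^ ρ)
      Filter.atTop Filter.atTop := by
    apply (tendsto_rpow_atTop hρ).comp
    have h1 : Filter.Tendsto (fun n : ℕ => (n:ℝ) * ρ) Filter.atTop Filter.atTop :=
      Filter.Tendsto.atTop_mul_const hρ tendsto_natCast_atTop_atTop
    have h2 := Filter.tendsto_atTop_add_const_right Filter.atTop (b + ρ - 1) h1
    refine h2.congr fun n => by ring
  filter_upwards [htend.eventually_ge_atTop (2 * y + 1)] with n hn
  set s : ℝ := (n : ℝ) * ρ + b with hsdef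
  have hnρ : (0:ℝ) ≤ (n : ℝ) * ρ := mul_nonneg (Nat.cast_nonneg n) hρ.le
  have hs1 : 1 ≤ s := by rw [hsdef]; linarith
  have hG1 : 0 < Real.Gamma s := hGpos n
  have hexp : ((n + 1 : ℕ) : ℝ) * ρ + b = s + ρ := by rw [hsdef]; push_cast; ring
  have hG2 : 0 < Real.Gamma (s + ρ) := Real.Gamma_pos_of_pos (by linarith)
  have hgam := gamma_mul_rpow_le hρ hρ1 hs1
  have hn' : 2 * y + 1 ≤ (s + ρ - 1) ^ ρ := hn
  have hynn : (0:ℝ) ≤ y ^ n := pow_nonneg hy n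
  have hnorm1 : ‖y ^ (n + 1) / Real.Gamma (((n + 1 : ℕ) : ℝ) * ρ + b)‖
      = y ^ (n + 1) / Real.Gamma (s + ρ) := by
    rw [hexp, Real.norm_eq_abs, abs_of_nonneg (by positivity)]
  have hnorm2 : ‖y ^ n / Real.Gamma ((n : ℝ) * ρ + b)‖ = y ^ n / Real.Gamma s := by
    rw [Real.norm_eq_abs, abs_of_nonneg (div_nonneg hynn hG1.le)]
  rw [hnorm1, hnorm2,
    show (2:ℝ)⁻¹ * (y ^ n / Real.Gamma s) = y ^ n / (2 * Real.Gamma s) by ring,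
    div_le_div_iff₀ hG2 (by positivity)]
  have hkey : Real.Gamma s * (2 * y + 1) ≤ Real.Gamma (s + ρ) :=
    le_trans (mul_le_mul_of_nonneg_left hn' hG1.le) hgam
  have hmul := mul_le_mul_of_nonneg_left hkey hynn
  calc y ^ (n + 1) * (2 * Real.Gamma s) = y ^ n * (Real.Gamma s * (2 * y)) := by ring
    _ ≤ y ^ n * (Real.Gamma s * (2 * y + 1)) := by nlinarith
    _ ≤ y ^ n * Real.Gamma (s + ρ) := hmul

/-- Summability of Mittag-Leffler type series, signed case. -/
lemma ml_summable' {ρ : ℝ} (hρ : 0 < ρ) (hρ1 : ρ ≤ 1) (z : ℝ) {b : ℝ} (hb : 1 ≤ b) :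
    Summable fun n : ℕ => z ^ n / Real.Gamma ((n : ℝ) * ρ + b) := by
  apply Summable.of_abs
  refine (ml_summable hρ hρ1 (abs_nonneg z) hb).congr fun n => ?_
  have hG : 0 < Real.Gamma ((n : ℝ) * ρ + b) := by
    apply Real.Gamma_pos_of_pos
    have : (0:ℝ) ≤ (n : ℝ) * ρ := mul_nonneg (Nat.cast_nonneg n) hρ.le
    linarith
  rw [abs_div, abs_pow, abs_of_pos hG]

lemma antidiagonal_two_pow_sum (n : ℕ) (w : ℝ) :
    ∑ kl ∈ Finset.HasAntidiagonal.antidiagonal n, (2:ℝ) ^ kl.2 * w = ((2:ℝ) ^ (n + 1) - 1) * w := by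
  rw [Finset.Nat.sum_antidiagonal_eq_sum_range_succ (fun i j => (2:ℝ) ^ j * w) n]
  have hswap : ∑ k ∈ Finset.range (n + 1), (2:ℝ) ^ (n - k) * w
      = ∑ k ∈ Finset.range (n + 1), (2:ℝ) ^ k * w := by
    rw [← Finset.sum_range_reflect (fun j => (2:ℝ) ^ j * w) (n + 1)]
    apply Finset.sum_congr rfl
    intro k hk
    have hk2 : n + 1 - 1 - k = n - k := by omega
    rw [hk2]
  rw [hswap, ← Finset.sum_mul, geom_sum_eq (by norm_num : (2:ℝ) ≠ 1)]
  norm_num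

theorem stmt4 (lam mu ρ t : ℝ) (hlam : 0 < lam) (hmu : 0 < mu) (hne : lam ≠ mu)
    (hρ : 0 < ρ) (hρ1 : ρ ≤ 1) (ht : 0 ≤ t) :
    (Summable fun p : ℕ × ℕ =>
      |2 ^ p.2 * (lam - mu) ^ (p.1 + p.2) * t ^ (((p.1 + p.2 + 1 : ℕ) : ℝ) * ρ)
        / Real.Gamma (((p.1 + p.2 + 1 : ℕ) : ℝ) * ρ + 1)|) ∧
    2 * lam * ∑' (k : ℕ) (r : ℕ),
        2 ^ r * (lam - mu) ^ (k + r) * t ^ (((k + r + 1 : ℕ) : ℝ) * ρ)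
          / Real.Gamma (((k + r + 1 : ℕ) : ℝ) * ρ + 1)
      = (2 * lam / (lam - mu)) *
          (ml2 ρ 1 (2 * (lam - mu) * t ^ ρ) - ml2 ρ 1 ((lam - mu) * t ^ ρ)) := by
  have hc0 : lam - mu ≠ 0 := sub_ne_zero.mpr hne
  set c : ℝ := lam - mu with hcdef
  set X : ℝ := t ^ ρ with hXdef
  have hX0 : 0 ≤ X := Real.rpow_nonneg ht ρ
  have hGpos : ∀ n : ℕ, 0 < Real.Gamma (((n + 1 : ℕ) : ℝ) * ρ + 1) := by
    intro n
    apply Real.Gamma_pos_of_pos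
    have : (0:ℝ) ≤ ((n + 1 : ℕ) : ℝ) * ρ := mul_nonneg (Nat.cast_nonneg _) hρ.le
    linarith
  have hexp : ∀ n : ℕ, t ^ (((n + 1 : ℕ) : ℝ) * ρ) = X ^ (n + 1) := by
    intro n
    rw [mul_comm, Real.rpow_mul ht, Real.rpow_natCast]
  set F : ℕ × ℕ → ℝ := fun p =>
    2 ^ p.2 * c ^ (p.1 + p.2) * t ^ (((p.1 + p.2 + 1 : ℕ) : ℝ) * ρ)
      / Real.Gamma (((p.1 + p.2 + 1 : ℕ) : ℝ) * ρ + 1) with hFdef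
  -- evaluation of `F` and `|F|` on the antidiagonal
  have hFeval : ∀ (n : ℕ), ∀ kl ∈ Finset.HasAntidiagonal.antidiagonal n, F kl
      = 2 ^ kl.2 * (c ^ n * X ^ (n + 1) / Real.Gamma (((n + 1 : ℕ) : ℝ) * ρ + 1)) := by
    intro n kl hkl
    have h : kl.1 + kl.2 = n := Finset.HasAntidiagonal.mem_antidiagonal.mp hkl
    rw [hFdef]
    simp only
    rw [h, hexp n]
    ring
  have habsFeval : ∀ (n : ℕ), ∀ kl ∈ Finset.HasAntidiagonal.antidiagonal n, |F kl|
      = 2 ^ kl.2 * (|c| ^ n * X ^ (n + 1) / Real.Gamma (((n + 1 : ℕ) : ℝ) * ρ + 1)) := by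
    intro n kl hkl
    have h : kl.1 + kl.2 = n := Finset.HasAntidiagonal.mem_antidiagonal.mp hkl
    rw [hFdef]
    simp only
    rw [h, hexp n, abs_div, abs_of_pos (hGpos n), abs_mul, abs_mul, abs_pow, abs_pow,
      abs_pow, abs_of_nonneg hX0, abs_two]
    ring
  have hGam2 : ∀ n : ℕ, ((n + 1 : ℕ) : ℝ) * ρ + 1 = (n : ℝ) * ρ + (ρ + 1) := by
    intro n; push_cast; ring
  -- summability of the grouped absolute series
  have hsumAbsGrouped : Summable fun n : ℕ =>
      ((2:ℝ) ^ (n + 1) - 1) * (|c| ^ n * X ^ (n + 1)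
        / Real.Gamma (((n + 1 : ℕ) : ℝ) * ρ + 1)) := by
    have hmaj : Summable fun n : ℕ =>
        2 * X * ((2 * |c| * X) ^ n / Real.Gamma ((n : ℝ) * ρ + (ρ + 1))) :=
      (ml_summable hρ hρ1 (by positivity) (by linarith)).mul_left _
    apply Summable.of_nonneg_of_le _ _ hmaj
    · intro n
      have h1 : (1:ℝ) ≤ 2 ^ (n + 1) := one_le_pow₀ (by norm_num)
      exact mul_nonneg (by linarith) (div_nonneg (by positivity) (hGpos n).le)
    · intro n
      have hG : 0 < Real.Gamma ((n : ℝ) * ρ + (ρ + 1)) := by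
        rw [← hGam2 n]; exact hGpos n
      rw [hGam2 n]
      have hnum : ((2:ℝ) ^ (n + 1) - 1) * (|c| ^ n * X ^ (n + 1))
          ≤ 2 * X * (2 * |c| * X) ^ n := by
        have h2 : ((2:ℝ) ^ (n + 1) - 1) ≤ 2 ^ (n + 1) := by linarith
        calc ((2:ℝ) ^ (n + 1) - 1) * (|c| ^ n * X ^ (n + 1))
            ≤ 2 ^ (n + 1) * (|c| ^ n * X ^ (n + 1)) :=
              mul_le_mul_of_nonneg_right h2 (by positivity)
          _ = 2 * X * (2 * |c| * X) ^ n := by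
              rw [mul_pow, mul_pow, pow_succ, pow_succ]; ring
      calc ((2:ℝ) ^ (n + 1) - 1) * (|c| ^ n * X ^ (n + 1) / Real.Gamma ((n:ℝ) * ρ + (ρ + 1)))
          = ((2:ℝ) ^ (n + 1) - 1) * (|c| ^ n * X ^ (n + 1))
              / Real.Gamma ((n:ℝ) * ρ + (ρ + 1)) := by ring
        _ ≤ 2 * X * (2 * |c| * X) ^ n / Real.Gamma ((n:ℝ) * ρ + (ρ + 1)) := by gcongr
        _ = 2 * X * ((2 * |c| * X) ^ n / Real.Gamma ((n:ℝ) * ρ + (ρ + 1))) := by ring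
  -- summability of |F| over ℕ × ℕ via the antidiagonal sigma decomposition
  set e := Finset.HasAntidiagonal.sigmaAntidiagonalEquivProd (A := ℕ) with hedef
  have hsumAbs : Summable fun p : ℕ × ℕ => |F p| := by
    rw [← e.summable_iff]
    apply (summable_sigma_of_nonneg fun x => abs_nonneg _).mpr
    refine ⟨fun n => (hasSum_fintype _).summable, ?_⟩
    have heq : ∀ n : ℕ, (∑' y : (Finset.HasAntidiagonal.antidiagonal n : Finset (ℕ × ℕ)),
        |F (e ⟨n, y⟩)|) = ((2:ℝ) ^ (n + 1) - 1) *
          (|c| ^ n * X ^ (n + 1) / Real.Gamma (((n + 1 : ℕ) : ℝ) * ρ + 1)) := by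
      intro n
      rw [tsum_fintype]
      have : ∀ y : (Finset.HasAntidiagonal.antidiagonal n : Finset (ℕ × ℕ)), |F (e ⟨n, y⟩)| = |F ↑y| := by
        intro y; rfl
      rw [Finset.sum_congr rfl fun y _ => this y, Finset.sum_coe_sort _ fun kl => |F kl|,
        Finset.sum_congr rfl (habsFeval n), antidiagonal_two_pow_sum]
    exact (hsumAbsGrouped.congr fun n => (heq n).symm)
  have hsumF : Summable F := hsumAbs.of_abs
  refine ⟨hsumAbs, ?_⟩
  -- group the double sum over antidiagonals
  have hsig : Summable (F ∘ e) := e.summable_iff.mpr hsumF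
  have hgroup : ∑' (k : ℕ) (r : ℕ), F (k, r) = ∑' n : ℕ,
      ((2:ℝ) ^ (n + 1) - 1) * (c ^ n * X ^ (n + 1)
        / Real.Gamma (((n + 1 : ℕ) : ℝ) * ρ + 1)) := by
    rw [← Summable.tsum_prod' hsumF fun k => hsumF.prod_factor k, ← e.tsum_eq F]
    have hsg : ∑' x : (n : ℕ) × (Finset.HasAntidiagonal.antidiagonal n : Finset (ℕ × ℕ)), F (e x)
        = ∑' (n : ℕ) (y : (Finset.HasAntidiagonal.antidiagonal n : Finset (ℕ × ℕ))), F (e ⟨n, y⟩) :=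
      Summable.tsum_sigma' (fun n => (hasSum_fintype _).summable) hsig
    rw [hsg]
    apply tsum_congr
    intro n
    rw [tsum_fintype]
    have : ∀ y : (Finset.HasAntidiagonal.antidiagonal n : Finset (ℕ × ℕ)), F (e ⟨n, y⟩) = F ↑y := by
      intro y; rfl
    rw [Finset.sum_congr rfl fun y _ => this y, Finset.sum_coe_sort _ F,
      Finset.sum_congr rfl (hFeval n), antidiagonal_two_pow_sum]
  -- expand the Mittag-Leffler functions
  have hml : ∀ z : ℝ, ml2 ρ 1 z
      = 1 + ∑' n : ℕ, z ^ (n + 1) / Real.Gamma (((n + 1 : ℕ) : ℝ) * ρ + 1) := by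
    intro z
    rw [ml2, Summable.tsum_eq_zero_add (ml_summable' hρ hρ1 z le_rfl)]
    congr 1
    norm_num [Real.Gamma_one]
  have hshift : ∀ z : ℝ, Summable fun n : ℕ =>
      z ^ (n + 1) / Real.Gamma (((n + 1 : ℕ) : ℝ) * ρ + 1) :=
    fun z => (summable_nat_add_iff 1).mpr (ml_summable' hρ hρ1 z le_rfl)
  have hdiff : ml2 ρ 1 (2 * c * X) - ml2 ρ 1 (c * X)
      = ∑' n : ℕ, ((2 * c * X) ^ (n + 1) - (c * X) ^ (n + 1))
          / Real.Gamma (((n + 1 : ℕ) : ℝ) * ρ + 1) := by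
    rw [hml, hml]
    rw [show ∀ A B : ℝ, (1 + A) - (1 + B) = A - B from fun A B => by ring]
    rw [← Summable.tsum_sub (hshift (2 * c * X)) (hshift (c * X))]
    exact tsum_congr fun n => div_sub_div_same _ _ _
  rw [hgroup, hdiff, ← tsum_mul_left, ← tsum_mul_left]
  apply tsum_congr
  intro n
  have hG := (hGpos n).ne'
  rw [mul_pow, mul_pow, mul_pow]
  field_simp
  ring
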